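/- Let a, b, c be real numbers with a + b + c = 1 and let x, y, z be real with 0 ≤ x, y, z < 1. Then ∑_{(l,m,n): l,m,n ≥ 1, l ≤ n, m ≤ n, gcd(l,m,n)=1} (1/(l^a m^b n^c)) · log(1/(1 - x^l y^m z^n)) = ∑_{n=1}^∞ (∑_{l=1}^n x^l/l^a) · (∑_{m=1}^n y^m/m^b) · z^n/n^c. -/

import Mathlib

namespace Stmt11Aux

abbrev S := {t : ℕ+ × ℕ+ × ℕ+ // t.1 ≤ t.2.2 ∧ t.2.1 ≤ t.2.2 ∧
    Nat.gcd (t.1 : ℕ) (Nat.gcd (t.2.1 : ℕ) (t.2.2 : ℕ)) = 1}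
abbrev T := {t : ℕ+ × ℕ+ × ℕ+ // t.1 ≤ t.2.2 ∧ t.2.1 ≤ t.2.2}

def mulk (p : S × ℕ+) : T :=
  ⟨(p.2 * p.1.val.1, p.2 * p.1.val.2.1, p.2 * p.1.val.2.2),
   mul_le_mul_right p.1.prop.1 p.2, mul_le_mul_right p.1.prop.2.1 p.2⟩

lemma mulk_injective : Function.Injective mulk := by
  rintro ⟨⟨⟨l, m, n⟩, hl, hm, hg⟩, k⟩ ⟨⟨⟨l', m', n'⟩, hl', hm', hg'⟩, k'⟩ h
  have h1 : (k : ℕ) * l = (k' : ℕ) * l' := congrArg (fun t : T => ((t.val.1 : ℕ))) h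
  have h2 : (k : ℕ) * m = (k' : ℕ) * m' := congrArg (fun t : T => ((t.val.2.1 : ℕ))) h
  have h3 : (k : ℕ) * n = (k' : ℕ) * n' := congrArg (fun t : T => ((t.val.2.2 : ℕ))) h
  have hk : (k : ℕ) = (k' : ℕ) := by
    have e1 : Nat.gcd ((k:ℕ) * l) (Nat.gcd ((k:ℕ) * m) ((k:ℕ) * n)) = k := by
      rw [Nat.gcd_mul_left, Nat.gcd_mul_left, hg, mul_one]
    have e2 : Nat.gcd ((k':ℕ) * l') (Nat.gcd ((k':ℕ) * m') ((k':ℕ) * n')) = k' := by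
      rw [Nat.gcd_mul_left, Nat.gcd_mul_left, hg', mul_one]
    rw [← e1, ← e2, h1, h2, h3]
  have hkpos : 0 < (k : ℕ) := k.pos
  have hll : (l : ℕ) = l' := by rw [hk] at h1; exact Nat.eq_of_mul_eq_mul_left (hk ▸ hkpos) h1
  have hmm : (m : ℕ) = m' := by rw [hk] at h2; exact Nat.eq_of_mul_eq_mul_left (hk ▸ hkpos) h2
  have hnn : (n : ℕ) = n' := by rw [hk] at h3; exact Nat.eq_of_mul_eq_mul_left (hk ▸ hkpos) h3
  refine Prod.ext (Subtype.ext (Prod.ext ?_ (Prod.ext ?_ ?_))) ?_ <;>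
    exact PNat.coe_injective (by assumption)

lemma mulk_surjective : Function.Surjective mulk := by
  rintro ⟨⟨L, M, N⟩, h1, h2⟩
  set d : ℕ := Nat.gcd (L : ℕ) (Nat.gcd (M : ℕ) (N : ℕ)) with hd
  have hdpos : 0 < d := Nat.gcd_pos_of_pos_left _ L.pos
  have hdL : d ∣ (L : ℕ) := Nat.gcd_dvd_left _ _
  have hdMN : d ∣ Nat.gcd (M : ℕ) (N : ℕ) := Nat.gcd_dvd_right _ _
  have hdM : d ∣ (M : ℕ) := hdMN.trans (Nat.gcd_dvd_left _ _)
  have hdN : d ∣ (N : ℕ) := hdMN.trans (Nat.gcd_dvd_right _ _)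
  refine ⟨⟨⟨⟨⟨(L:ℕ)/d, Nat.div_pos (Nat.le_of_dvd L.pos hdL) hdpos⟩,
      ⟨(M:ℕ)/d, Nat.div_pos (Nat.le_of_dvd M.pos hdM) hdpos⟩,
      ⟨(N:ℕ)/d, Nat.div_pos (Nat.le_of_dvd N.pos hdN) hdpos⟩⟩, ?_, ?_, ?_⟩,
      ⟨d, hdpos⟩⟩, ?_⟩
  · exact Nat.div_le_div_right (by exact_mod_cast h1)
  · exact Nat.div_le_div_right (by exact_mod_cast h2)
  · show Nat.gcd ((L:ℕ)/d) (Nat.gcd ((M:ℕ)/d) ((N:ℕ)/d)) = 1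
    rw [Nat.gcd_div hdM hdN, Nat.gcd_div hdL hdMN, ← hd, Nat.div_self hdpos]
  · apply Subtype.ext
    refine Prod.ext ?_ (Prod.ext ?_ ?_) <;>
      · apply PNat.coe_injective
        exact Nat.mul_div_cancel' (by assumption)

noncomputable def e : S × ℕ+ ≃ T := Equiv.ofBijective mulk ⟨mulk_injective, mulk_surjective⟩

def sig : T ≃ Σ n : ℕ+, {p : ℕ+ × ℕ+ // p ∈ Finset.Icc 1 n ×ˢ Finset.Icc 1 n} where
  toFun t := ⟨t.val.2.2, ⟨(t.val.1, t.val.2.1), by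
    simp only [Finset.mem_product, Finset.mem_Icc]
    exact ⟨⟨t.val.1.one_le, t.prop.1⟩, ⟨t.val.2.1.one_le, t.prop.2⟩⟩⟩⟩
  invFun p := ⟨(p.2.val.1, p.2.val.2, p.1), by
    have := p.2.prop
    simp only [Finset.mem_product, Finset.mem_Icc] at this
    exact ⟨this.1.2, this.2.2⟩⟩
  left_inv := by rintro ⟨⟨l, m, n⟩, h⟩; rfl
  right_inv := by rintro ⟨n, ⟨⟨l, m⟩, h⟩⟩; rfl

lemma pnat_sum (n : ℕ+) (F : ℕ → ℝ) :
    ∑ l ∈ Finset.Icc (1 : ℕ+) n, F (l : ℕ) = ∑ l ∈ Finset.Icc 1 (n : ℕ), F l := by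
  refine Finset.sum_nbij' (i := fun (l : ℕ+) => (l : ℕ)) (j := fun l => Nat.toPNat' l)
    ?_ ?_ ?_ ?_ ?_
  · intro a ha
    simp only [Finset.mem_Icc] at ha ⊢
    exact ⟨a.one_le, by exact_mod_cast ha.2⟩
  · intro a ha
    simp only [Finset.mem_Icc] at ha ⊢
    constructor
    · exact PNat.one_le _
    · have : (Nat.toPNat' a : ℕ) = a := by
        simp [Nat.toPNat']; omega
      rw [← PNat.coe_le_coe, this]; exact ha.2
  · intro a ha
    simp only [Finset.mem_Icc] at ha
    apply PNat.coe_injective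
    have := a.pos
    simp [Nat.toPNat']; omega
  · intro a ha
    simp only [Finset.mem_Icc] at ha
    simp [Nat.toPNat']; omega
  · intro a ha; rfl

noncomputable def g (a b c x y z : ℝ) (t : ℕ+ × ℕ+ × ℕ+) : ℝ :=
  x ^ (t.1 : ℕ) * y ^ (t.2.1 : ℕ) * z ^ (t.2.2 : ℕ) /
    ((t.1 : ℝ) ^ a * (t.2.1 : ℝ) ^ b * (t.2.2 : ℝ) ^ c)

lemma g_nonneg {a b c x y z : ℝ} (hx0 : 0 ≤ x) (hy0 : 0 ≤ y) (hz0 : 0 ≤ z)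
    (t : ℕ+ × ℕ+ × ℕ+) : 0 ≤ g a b c x y z t := by
  unfold g
  have h1 : (0:ℝ) ≤ (t.1 : ℝ) := by positivity
  have h2 : (0:ℝ) ≤ (t.2.1 : ℝ) := by positivity
  have h3 : (0:ℝ) ≤ (t.2.2 : ℝ) := by positivity
  apply div_nonneg (by positivity)
  exact mul_nonneg (mul_nonneg (Real.rpow_nonneg h1 a) (Real.rpow_nonneg h2 b))
    (Real.rpow_nonneg h3 c)

lemma rpow_inv_le (t : ℝ) (l n : ℕ+) (h : l ≤ n) : ((l:ℝ) ^ t)⁻¹ ≤ (n:ℝ) ^ |t| := by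
  have hl1 : (1:ℝ) ≤ (l:ℝ) := by exact_mod_cast l.one_le
  have hln : (l:ℝ) ≤ (n:ℝ) := by exact_mod_cast h
  rw [← Real.rpow_neg (by linarith)]
  calc (l:ℝ) ^ (-t) ≤ (l:ℝ) ^ |t| :=
        Real.rpow_le_rpow_of_exponent_le hl1 (neg_le_abs t)
    _ ≤ (n:ℝ) ^ |t| := Real.rpow_le_rpow (by linarith) hln (abs_nonneg t)

lemma g_le {a b c x y z : ℝ} (hx0 : 0 ≤ x) (hx1 : x < 1) (hy0 : 0 ≤ y) (hy1 : y < 1)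
    (hz0 : 0 ≤ z) (t : T) :
    g a b c x y z t.val ≤ ((t.val.2.2 : ℕ) : ℝ) ^ (⌈|a| + |b| + |c|⌉₊) * z ^ ((t.val.2.2 : ℕ)) := by
  obtain ⟨⟨l, m, n⟩, h1, h2⟩ := t
  have hn1 : (1:ℝ) ≤ (n:ℝ) := by exact_mod_cast n.one_le
  have hla : (0:ℝ) < (l:ℝ) ^ a := Real.rpow_pos_of_pos (by exact_mod_cast l.pos) a
  have hmb : (0:ℝ) < (m:ℝ) ^ b := Real.rpow_pos_of_pos (by exact_mod_cast m.pos) b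
  have hnc : (0:ℝ) < (n:ℝ) ^ c := Real.rpow_pos_of_pos (by exact_mod_cast n.pos) c
  have hnum : x ^ (l:ℕ) * y ^ (m:ℕ) * z ^ (n:ℕ) ≤ z ^ (n:ℕ) := by
    have := mul_le_one₀ (pow_le_one₀ hx0 hx1.le) (by positivity) (pow_le_one₀ hy0 hy1.le)
      (a := x ^ (l:ℕ)) (b := y ^ (m:ℕ))
    calc x ^ (l:ℕ) * y ^ (m:ℕ) * z ^ (n:ℕ) ≤ 1 * z ^ (n:ℕ) := by
          apply mul_le_mul_of_nonneg_right this (by positivity)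
      _ = z ^ (n:ℕ) := one_mul _
  have hden : ((l:ℝ) ^ a * (m:ℝ) ^ b * (n:ℝ) ^ c)⁻¹ ≤ ((n:ℕ):ℝ) ^ (⌈|a| + |b| + |c|⌉₊) := by
    rw [mul_inv, mul_inv]
    have e1 := rpow_inv_le a l n h1
    have e2 := rpow_inv_le b m n h2
    have e3 := rpow_inv_le c n n le_rfl
    calc ((l:ℝ)^a)⁻¹ * ((m:ℝ)^b)⁻¹ * ((n:ℝ)^c)⁻¹
        ≤ (n:ℝ) ^ |a| * (n:ℝ) ^ |b| * (n:ℝ) ^ |c| := by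
          apply mul_le_mul (mul_le_mul e1 e2 (by positivity) (by positivity)) e3
            (by positivity) (by positivity)
      _ = (n:ℝ) ^ (|a| + |b| + |c|) := by
          rw [← Real.rpow_add (by linarith), ← Real.rpow_add (by linarith)]
      _ ≤ (n:ℝ) ^ ((⌈|a| + |b| + |c|⌉₊ : ℝ)) :=
          Real.rpow_le_rpow_of_exponent_le hn1 (Nat.le_ceil _)
      _ = ((n:ℕ):ℝ) ^ (⌈|a| + |b| + |c|⌉₊) := by
          rw [Real.rpow_natCast]
  calc g a b c x y z (l, m, n)
      = (x ^ (l:ℕ) * y ^ (m:ℕ) * z ^ (n:ℕ)) * ((l:ℝ) ^ a * (m:ℝ) ^ b * (n:ℝ) ^ c)⁻¹ := by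
        rw [g, div_eq_mul_inv]
    _ ≤ z ^ (n:ℕ) * (((n:ℕ):ℝ) ^ (⌈|a| + |b| + |c|⌉₊)) := by
        apply mul_le_mul hnum hden (by positivity) (by positivity)
    _ = ((n:ℕ):ℝ) ^ (⌈|a| + |b| + |c|⌉₊) * z ^ ((n:ℕ)) := mul_comm _ _

lemma hasSum_log {w : ℝ} (h0 : 0 ≤ w) (h1 : w < 1) :
    HasSum (fun k : ℕ+ => w ^ (k : ℕ) / (k : ℕ)) (Real.log (1 / (1 - w))) := by
  have h := Real.hasSum_pow_div_log_of_abs_lt_one (x := w) (abs_lt.2 ⟨by linarith, h1⟩)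
  rw [one_div, Real.log_inv]
  apply (Equiv.pnatEquivNat.symm.hasSum_iff).1
  convert h using 1
  funext k
  simp [Equiv.pnatEquivNat, Nat.succPNat]


end Stmt11Aux

namespace Stmt11Aux

lemma summable_sig {a b c x y z : ℝ} (hx0 : 0 ≤ x) (hx1 : x < 1) (hy0 : 0 ≤ y) (hy1 : y < 1)
    (hz0 : 0 ≤ z) (hz1 : z < 1) :
    Summable ((fun t : T => g a b c x y z t.val) ∘ sig.symm) := by
  set K := ⌈|a| + |b| + |c|⌉₊ with hK
  have hnn : ∀ p : (Σ n : ℕ+, {p : ℕ+ × ℕ+ // p ∈ Finset.Icc 1 n ×ˢ Finset.Icc 1 n}),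
      0 ≤ ((fun t : T => g a b c x y z t.val) ∘ sig.symm) p :=
    fun p => g_nonneg hx0 hy0 hz0 _
  rw [summable_sigma_of_nonneg hnn]
  constructor
  · intro n
    exact Summable.of_finite
  · have hbnd : Summable (fun n : ℕ+ => ((n : ℕ) : ℝ) ^ (K + 2) * z ^ ((n : ℕ))) := by
      have hz : ‖z‖ < 1 := by rw [Real.norm_eq_abs, abs_of_nonneg hz0]; exact hz1
      exact (summable_pow_mul_geometric_of_norm_lt_one (K + 2) hz).comp_injective
        (i := fun n : ℕ+ => (n : ℕ)) (fun u v huv => PNat.coe_injective huv)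
    apply Summable.of_nonneg_of_le _ _ hbnd
    · intro n
      exact tsum_nonneg fun p => g_nonneg hx0 hy0 hz0 _
    · intro n
      have : ∑' (p : {p : ℕ+ × ℕ+ // p ∈ Finset.Icc 1 n ×ˢ Finset.Icc 1 n}),
          ((fun t : T => g a b c x y z t.val) ∘ sig.symm) ⟨n, p⟩ =
          ∑ p ∈ Finset.Icc 1 n ×ˢ Finset.Icc 1 n,
            g a b c x y z (p.1, p.2, n) := by
        rw [← Finset.tsum_subtype]
        rfl
      rw [this]
      have hcard : (Finset.Icc 1 n ×ˢ Finset.Icc 1 n).card = (n : ℕ) * (n : ℕ) := by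
        rw [Finset.card_product, PNat.card_Icc]
        simp
      calc ∑ p ∈ Finset.Icc 1 n ×ˢ Finset.Icc 1 n, g a b c x y z (p.1, p.2, n)
          ≤ ∑ _p ∈ Finset.Icc 1 n ×ˢ Finset.Icc 1 n, ((n : ℕ) : ℝ) ^ K * z ^ ((n : ℕ)) := by
            apply Finset.sum_le_sum
            intro p hp
            simp only [Finset.mem_product, Finset.mem_Icc] at hp
            exact g_le hx0 hx1 hy0 hy1 hz0 ⟨(p.1, p.2, n), hp.1.2, hp.2.2⟩
        _ = ((n : ℕ) : ℝ) ^ (K + 2) * z ^ ((n : ℕ)) := by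
            rw [Finset.sum_const, hcard]
            push_cast
            ring

lemma summable_T {a b c x y z : ℝ} (hx0 : 0 ≤ x) (hx1 : x < 1) (hy0 : 0 ≤ y) (hy1 : y < 1)
    (hz0 : 0 ≤ z) (hz1 : z < 1) :
    Summable (fun t : T => g a b c x y z t.val) :=
  (Equiv.summable_iff sig.symm).1 (summable_sig hx0 hx1 hy0 hy1 hz0 hz1)

end Stmt11Aux

namespace Stmt11Aux

lemma g_mulk {a b c x y z : ℝ} (habc : a + b + c = 1) (hx0 : 0 ≤ x) (hy0 : 0 ≤ y)
    (hz0 : 0 ≤ z) (s : S) (k : ℕ+) :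
    g a b c x y z (mulk (s, k)).val =
      (1 / ((s.val.1 : ℝ) ^ a * (s.val.2.1 : ℝ) ^ b * (s.val.2.2 : ℝ) ^ c)) *
        ((x ^ (s.val.1 : ℕ) * y ^ (s.val.2.1 : ℕ) * z ^ (s.val.2.2 : ℕ)) ^ (k : ℕ) / (k : ℕ)) := by
  obtain ⟨⟨l, m, n⟩, hs⟩ := s
  have hk0 : (0:ℝ) < ((k:ℕ):ℝ) := by exact_mod_cast k.pos
  have hl0 : (0:ℝ) < ((l:ℕ):ℝ) := by exact_mod_cast l.pos
  have hm0 : (0:ℝ) < ((m:ℕ):ℝ) := by exact_mod_cast m.pos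
  have hn0 : (0:ℝ) < ((n:ℕ):ℝ) := by exact_mod_cast n.pos
  have hla : (0:ℝ) < ((l:ℕ):ℝ) ^ a := Real.rpow_pos_of_pos hl0 a
  have hmb : (0:ℝ) < ((m:ℕ):ℝ) ^ b := Real.rpow_pos_of_pos hm0 b
  have hnc : (0:ℝ) < ((n:ℕ):ℝ) ^ c := Real.rpow_pos_of_pos hn0 c
  have hkabc : ((k:ℕ):ℝ) ^ a * ((k:ℕ):ℝ) ^ b * ((k:ℕ):ℝ) ^ c = ((k:ℕ):ℝ) := by
    rw [← Real.rpow_add hk0, ← Real.rpow_add hk0, habc, Real.rpow_one]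
  simp only [g, mulk, PNat.mul_coe]
  push_cast
  rw [Real.mul_rpow hk0.le hl0.le, Real.mul_rpow hk0.le hm0.le, Real.mul_rpow hk0.le hn0.le]
  have hden : ((k:ℕ):ℝ) ^ a * ((l:ℕ):ℝ) ^ a * (((k:ℕ):ℝ) ^ b * ((m:ℕ):ℝ) ^ b) *
      (((k:ℕ):ℝ) ^ c * ((n:ℕ):ℝ) ^ c) =
      ((k:ℕ):ℝ) * (((l:ℕ):ℝ) ^ a * ((m:ℕ):ℝ) ^ b * ((n:ℕ):ℝ) ^ c) := by
    have h' : ((k:ℕ):ℝ) ^ a * ((l:ℕ):ℝ) ^ a * (((k:ℕ):ℝ) ^ b * ((m:ℕ):ℝ) ^ b) *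
        (((k:ℕ):ℝ) ^ c * ((n:ℕ):ℝ) ^ c) =
        (((k:ℕ):ℝ) ^ a * ((k:ℕ):ℝ) ^ b * ((k:ℕ):ℝ) ^ c) *
          (((l:ℕ):ℝ) ^ a * ((m:ℕ):ℝ) ^ b * ((n:ℕ):ℝ) ^ c) := by ring
    rw [h', hkabc]
  rw [hden, mul_pow, mul_pow, ← pow_mul' x, ← pow_mul' y, ← pow_mul' z,
    div_mul_div_comm, one_mul,
    mul_comm ((k:ℕ):ℝ) (((l:ℕ):ℝ) ^ a * ((m:ℕ):ℝ) ^ b * ((n:ℕ):ℝ) ^ c)]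

lemma w_bounds {x y z : ℝ} (hx0 : 0 ≤ x) (hx1 : x < 1) (hy0 : 0 ≤ y) (hy1 : y < 1)
    (hz0 : 0 ≤ z) (hz1 : z < 1) (l m n : ℕ+) :
    0 ≤ x ^ (l : ℕ) * y ^ (m : ℕ) * z ^ (n : ℕ) ∧
      x ^ (l : ℕ) * y ^ (m : ℕ) * z ^ (n : ℕ) < 1 := by
  constructor
  · positivity
  · have h1 : x ^ (l:ℕ) * y ^ (m:ℕ) ≤ 1 :=
      mul_le_one₀ (pow_le_one₀ hx0 hx1.le) (by positivity) (pow_le_one₀ hy0 hy1.le)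
    have h2 : z ^ (n:ℕ) ≤ z := by
      calc z ^ (n:ℕ) ≤ z ^ 1 := pow_le_pow_of_le_one hz0 hz1.le n.one_le
        _ = z := pow_one z
    calc x ^ (l:ℕ) * y ^ (m:ℕ) * z ^ (n:ℕ) ≤ 1 * z ^ (n:ℕ) :=
          mul_le_mul_of_nonneg_right h1 (by positivity)
      _ = z ^ (n:ℕ) := one_mul _
      _ ≤ z := h2
      _ < 1 := hz1

lemma tsum_T_eq {a b c x y z : ℝ} (hx0 : 0 ≤ x) (hx1 : x < 1) (hy0 : 0 ≤ y) (hy1 : y < 1)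
    (hz0 : 0 ≤ z) (hz1 : z < 1) :
    ∑' t : T, g a b c x y z t.val =
      ∑' n : ℕ+,
        (∑ l ∈ Finset.Icc 1 (n : ℕ), x ^ l / (l : ℝ) ^ a) *
          (∑ m ∈ Finset.Icc 1 (n : ℕ), y ^ m / (m : ℝ) ^ b) * (z ^ (n : ℕ) / (n : ℝ) ^ c) := by
  rw [← Equiv.tsum_eq sig.symm (fun t : T => g a b c x y z t.val)]
  rw [Summable.tsum_sigma (f := fun p : (Σ n : ℕ+, {p : ℕ+ × ℕ+ // p ∈ Finset.Icc 1 n ×ˢ Finset.Icc 1 n}) =>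
    g a b c x y z (sig.symm p).val) (summable_sig hx0 hx1 hy0 hy1 hz0 hz1)]
  apply tsum_congr
  intro n
  have h1 : ∑' (p : {p : ℕ+ × ℕ+ // p ∈ Finset.Icc 1 n ×ˢ Finset.Icc 1 n}),
      (fun t : T => g a b c x y z t.val) (sig.symm ⟨n, p⟩) =
      ∑ p ∈ Finset.Icc 1 n ×ˢ Finset.Icc 1 n, g a b c x y z (p.1, p.2, n) := by
    rw [← Finset.tsum_subtype]
    rfl
  rw [h1, Finset.sum_product,
    ← pnat_sum n (fun l => x ^ l / ((l : ℕ) : ℝ) ^ a),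
    ← pnat_sum n (fun m => y ^ m / ((m : ℕ) : ℝ) ^ b),
    Finset.sum_mul_sum, Finset.sum_mul]
  apply Finset.sum_congr rfl
  intro l _
  rw [Finset.sum_mul]
  apply Finset.sum_congr rfl
  intro m _
  simp only [g, div_mul_div_comm]

end Stmt11Aux

open Stmt11Aux in
theorem stmt_11 (a b c x y z : ℝ) (habc : a + b + c = 1)
    (hx0 : 0 ≤ x) (hx1 : x < 1) (hy0 : 0 ≤ y) (hy1 : y < 1) (hz0 : 0 ≤ z) (hz1 : z < 1) :
    ∑' t : {t : ℕ+ × ℕ+ × ℕ+ // t.1 ≤ t.2.2 ∧ t.2.1 ≤ t.2.2 ∧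
        Nat.gcd (t.1 : ℕ) (Nat.gcd (t.2.1 : ℕ) (t.2.2 : ℕ)) = 1},
        (1 / ((t.val.1 : ℝ) ^ a * (t.val.2.1 : ℝ) ^ b * (t.val.2.2 : ℝ) ^ c)) *
          Real.log (1 / (1 - x ^ (t.val.1 : ℕ) * y ^ (t.val.2.1 : ℕ) * z ^ (t.val.2.2 : ℕ))) =
      ∑' n : ℕ+,
        (∑ l ∈ Finset.Icc 1 (n : ℕ), x ^ l / (l : ℝ) ^ a) *
          (∑ m ∈ Finset.Icc 1 (n : ℕ), y ^ m / (m : ℝ) ^ b) * (z ^ (n : ℕ) / (n : ℝ) ^ c) := by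
  have hT := summable_T (a := a) (b := b) (c := c) hx0 hx1 hy0 hy1 hz0 hz1
  have hG : Summable (fun p : S × ℕ+ => g a b c x y z (mulk p).val) :=
    (Equiv.summable_iff e).2 hT
  have hGb : ∀ s : S, Summable (fun k : ℕ+ => g a b c x y z (mulk (s, k)).val) := by
    intro s
    have hw := w_bounds hx0 hx1 hy0 hy1 hz0 hz1 s.val.1 s.val.2.1 s.val.2.2
    exact Summable.congr (((hasSum_log hw.1 hw.2).summable).mul_left
      (1 / ((s.val.1 : ℝ) ^ a * (s.val.2.1 : ℝ) ^ b * (s.val.2.2 : ℝ) ^ c)))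
      (fun k => (g_mulk habc hx0 hy0 hz0 s k).symm)
  have step1 : ∑' t : S,
      (1 / ((t.val.1 : ℝ) ^ a * (t.val.2.1 : ℝ) ^ b * (t.val.2.2 : ℝ) ^ c)) *
        Real.log (1 / (1 - x ^ (t.val.1 : ℕ) * y ^ (t.val.2.1 : ℕ) * z ^ (t.val.2.2 : ℕ))) =
      ∑' s : S, ∑' k : ℕ+, g a b c x y z (mulk (s, k)).val := by
    apply tsum_congr
    intro s
    have hw := w_bounds hx0 hx1 hy0 hy1 hz0 hz1 s.val.1 s.val.2.1 s.val.2.2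
    have hl := (hasSum_log hw.1 hw.2).mul_left
      (1 / ((s.val.1 : ℝ) ^ a * (s.val.2.1 : ℝ) ^ b * (s.val.2.2 : ℝ) ^ c))
    rw [← hl.tsum_eq]
    exact tsum_congr fun k => (g_mulk habc hx0 hy0 hz0 s k).symm
  rw [step1]
  calc ∑' s : S, ∑' k : ℕ+, g a b c x y z (mulk (s, k)).val
      = ∑' p : S × ℕ+, g a b c x y z (mulk p).val := (Summable.tsum_prod' hG hGb).symm
    _ = ∑' t : T, g a b c x y z t.val := Equiv.tsum_eq e (fun t : T => g a b c x y z t.val)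
    _ = _ := tsum_T_eq hx0 hx1 hy0 hy1 hz0 hz1
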